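/- For r = 5, define a_g ∈ ℚ by y = Σ_{g≥0} a_g z^g being the unique power series solution in 1 + zℚ[[z]] of the quintic equation y⁵ − (z/6)y³ + (z²/400)y = 1. Then every coefficient a_g lies in ℤ[1/30], i.e., 30^N · a_g ∈ ℤ for some N depending on g; moreover a_g = 0 whenever g ≡ 3 (mod 5). -/

import Mathlib

open PowerSeries

noncomputable section Stmt9Aux

namespace Stmt9Aux

variable {A : Type*} [CommRing A]



/-- The quintic defect. -/
def FF (c1 c2 : A) (w : PowerSeries A) : PowerSeries A :=
  w ^ 5 - C (R := A) c1 * X * w ^ 3 + C (R := A) c2 * X ^ 2 * w - 1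

lemma taylor (c1 c2 : A) (u d : PowerSeries A) :
    FF c1 c2 (u + d) = FF c1 c2 u
      + d * (5 * u ^ 4 - 3 * C (R := A) c1 * X * u ^ 2 + C (R := A) c2 * X ^ 2)
      + d ^ 2 * (10 * u ^ 3 + 10 * u ^ 2 * d + 5 * u * d ^ 2 + d ^ 3
          - C (R := A) c1 * X * (3 * u + d)) := by
  simp only [FF]; ring

/-- Newton-type iteration. -/
def it (c1 c2 i5 : A) : ℕ → PowerSeries A
  | 0 => 1
  | k + 1 => it c1 c2 i5 k - C (R := A) i5 * FF c1 c2 (it c1 c2 i5 k)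

variable {c1 c2 i5 : A} (h5 : i5 * 5 = 1)

lemma h5C (h5 : i5 * 5 = 1) : (C (R := A) i5) * 5 = 1 := by
  rw [show (5 : PowerSeries A) = C (R := A) 5 by rw [map_ofNat], ← map_mul, h5, map_one]

include h5 in
lemma it_key : ∀ k : ℕ, (X : PowerSeries A) ^ (k + 1) ∣ FF c1 c2 (it c1 c2 i5 k)
    ∧ (X : PowerSeries A) ∣ (it c1 c2 i5 k - 1) := by
  intro k
  induction k with
  | zero =>
      constructor
      · refine ⟨-(C (R := A) c1) + C (R := A) c2 * X, ?_⟩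
        simp only [it, FF]; ring
      · simp [it]
  | succ k ih =>
      obtain ⟨hF, hw⟩ := ih
      set u := it c1 c2 i5 k with hu
      have hstep : it c1 c2 i5 (k + 1) = u + (-(C (R := A) i5) * FF c1 c2 u) := by
        simp only [it]; ring
      have hXd : (X : PowerSeries A) ∣ ((1 - u ^ 4) + C (R := A) i5 * X * (3 * C (R := A) c1 * u ^ 2 - C (R := A) c2 * X)) := by
        obtain ⟨s, hs⟩ := hw
        refine ⟨-(s * (u ^ 3 + u ^ 2 + u + 1)) + C (R := A) i5 * (3 * C (R := A) c1 * u ^ 2 - C (R := A) c2 * X), ?_⟩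
        linear_combination (-(u ^ 3 + u ^ 2 + u + 1)) * hs
      have hd : (X : PowerSeries A) ^ (k + 1) ∣ (-(C (R := A) i5) * FF c1 c2 u) :=
        Dvd.dvd.mul_left hF _
      have hmain : FF c1 c2 (it c1 c2 i5 (k + 1))
          = FF c1 c2 u * ((1 - u ^ 4) + C (R := A) i5 * X * (3 * C (R := A) c1 * u ^ 2 - C (R := A) c2 * X))
            + (-(C (R := A) i5) * FF c1 c2 u) ^ 2
              * (10 * u ^ 3 + 10 * u ^ 2 * (-(C (R := A) i5) * FF c1 c2 u)
                 + 5 * u * (-(C (R := A) i5) * FF c1 c2 u) ^ 2 + (-(C (R := A) i5) * FF c1 c2 u) ^ 3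
                 - C (R := A) c1 * X * (3 * u + (-(C (R := A) i5) * FF c1 c2 u))) := by
        rw [hstep, taylor]
        linear_combination (-(FF c1 c2 u * u ^ 4)) * h5C h5
      constructor
      · rw [hmain]
        apply dvd_add
        · rw [pow_succ]
          exact mul_dvd_mul hF hXd
        · refine Dvd.dvd.mul_right ?_ _
          calc (X : PowerSeries A) ^ (k + 1 + 1) ∣ X ^ (k + 1) * X ^ (k + 1) := by
                rw [← pow_add]; exact pow_dvd_pow _ (by omega)
            _ ∣ (-(C (R := A) i5) * FF c1 c2 u) ^ 2 := by
                rw [sq]; exact mul_dvd_mul hd hd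
      · rw [hstep, show u + (-(C (R := A) i5) * FF c1 c2 u) - 1
            = (u - 1) + (-(C (R := A) i5) * FF c1 c2 u) by ring]
        exact dvd_add hw (dvd_trans (dvd_pow_self X (Nat.succ_ne_zero k)) hd)

include h5 in
lemma coeff_stab : ∀ k n : ℕ, n ≤ k →
    coeff (R := A) n (it c1 c2 i5 k) = coeff (R := A) n (it c1 c2 i5 n) := by
  intro k
  induction k with
  | zero => intro n hn; rw [Nat.le_zero.mp hn]
  | succ k ih =>
      intro n hn
      rcases Nat.eq_or_lt_of_le hn with h | h
      · rw [h]
      · have hn' : n ≤ k := by omega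
        have hdvd : (X : PowerSeries A) ^ (k + 1) ∣ (C (R := A) i5 * FF c1 c2 (it c1 c2 i5 k)) :=
          Dvd.dvd.mul_left (it_key h5 k).1 _
        have hz : coeff (R := A) n (C (R := A) i5 * FF c1 c2 (it c1 c2 i5 k)) = 0 :=
          X_pow_dvd_iff.mp hdvd n (by omega)
        have : coeff (R := A) n (it c1 c2 i5 (k + 1)) = coeff (R := A) n (it c1 c2 i5 k) := by
          simp only [it, map_sub, hz, sub_zero]
        rw [this, ih n hn']

/-- The solution power series. -/
def sol (c1 c2 i5 : A) : PowerSeries A := mk fun n => coeff (R := A) n (it c1 c2 i5 n)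

include h5 in
lemma sol_sub (k : ℕ) : (X : PowerSeries A) ^ k ∣ (sol c1 c2 i5 - it c1 c2 i5 k) := by
  rw [X_pow_dvd_iff]
  intro m hm
  simp only [sol, map_sub, coeff_mk]
  rw [← coeff_stab h5 k m (le_of_lt hm), sub_self]

include h5 in
lemma sol_const : coeff (R := A) 0 (sol c1 c2 i5) = 1 := by
  simp [sol, it]

include h5 in
lemma sol_eq : FF c1 c2 (sol c1 c2 i5) = 0 := by
  ext n
  set u := it c1 c2 i5 (n + 1) with hu
  set d := sol c1 c2 i5 - u with hd
  have key := taylor c1 c2 u d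
  rw [show u + d = sol c1 c2 i5 by rw [hd]; ring] at key
  have h1 : coeff (R := A) n (FF c1 c2 u) = 0 :=
    X_pow_dvd_iff.mp (it_key h5 (n + 1)).1 n (by omega)
  have hXd : (X : PowerSeries A) ^ (n + 1) ∣ d := sol_sub h5 (n + 1)
  have h2 : coeff (R := A) n (d * (5 * u ^ 4 - 3 * C (R := A) c1 * X * u ^ 2 + C (R := A) c2 * X ^ 2)) = 0 := by
    have hdvd : (X : PowerSeries A) ^ (n + 1) ∣
        d * (5 * u ^ 4 - 3 * C (R := A) c1 * X * u ^ 2 + C (R := A) c2 * X ^ 2) :=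
      Dvd.dvd.mul_right hXd _
    exact X_pow_dvd_iff.mp hdvd n (Nat.lt_succ_self n)
  have h3 : coeff (R := A) n (d ^ 2 * (10 * u ^ 3 + 10 * u ^ 2 * d + 5 * u * d ^ 2 + d ^ 3
      - C (R := A) c1 * X * (3 * u + d))) = 0 := by
    have hd2 : (X : PowerSeries A) ^ (n + 1) ∣ d ^ 2 := by
      calc (X : PowerSeries A) ^ (n + 1) ∣ ((X : PowerSeries A) ^ (n + 1)) ^ 2 :=
            dvd_pow_self _ two_ne_zero
        _ ∣ d ^ 2 := pow_dvd_pow_of_dvd hXd 2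
    have hdvd : (X : PowerSeries A) ^ (n + 1) ∣ d ^ 2 * (10 * u ^ 3 + 10 * u ^ 2 * d
        + 5 * u * d ^ 2 + d ^ 3 - C (R := A) c1 * X * (3 * u + d)) := Dvd.dvd.mul_right hd2 _
    exact X_pow_dvd_iff.mp hdvd n (Nat.lt_succ_self n)
  rw [key]
  simp only [map_add, h1, h2, h3, map_zero, add_zero]

/-- The subring ℤ[1/30] of ℚ. -/
def S : Subring ℚ where
  carrier := {x | ∃ (N : ℕ) (m : ℤ), (30 : ℚ) ^ N * x = (m : ℚ)}
  one_mem' := ⟨0, 1, by norm_num⟩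
  zero_mem' := ⟨0, 0, by norm_num⟩
  add_mem' := by
    rintro x y ⟨N1, m1, h1⟩ ⟨N2, m2, h2⟩
    refine ⟨N1 + N2, 30 ^ N2 * m1 + 30 ^ N1 * m2, ?_⟩
    push_cast
    linear_combination (30 : ℚ) ^ N2 * h1 + (30 : ℚ) ^ N1 * h2
  mul_mem' := by
    rintro x y ⟨N1, m1, h1⟩ ⟨N2, m2, h2⟩
    refine ⟨N1 + N2, m1 * m2, ?_⟩
    push_cast
    linear_combination ((30 : ℚ) ^ N2 * y) * h1 + (m1 : ℚ) * h2
  neg_mem' := by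
    rintro x ⟨N, m, h⟩
    refine ⟨N, -m, ?_⟩
    push_cast
    linear_combination -h

lemma mem_S {x : ℚ} : x ∈ S ↔ ∃ (N : ℕ) (m : ℤ), (30 : ℚ) ^ N * x = (m : ℚ) := Iff.rfl

end Stmt9Aux

end Stmt9Aux

/-- `y ∈ 1 + zℚ[[z]]` solves the quintic `y⁵ - (z/6)y³ + (z²/400)y = 1`. -/
def isQuinticSol (y : PowerSeries ℚ) : Prop :=
  PowerSeries.coeff (R := ℚ) 0 y = 1 ∧
    y ^ 5 - PowerSeries.C (R := ℚ) (1 / 6) * PowerSeries.X * y ^ 3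
        + PowerSeries.C (R := ℚ) (1 / 400) * PowerSeries.X ^ 2 * y = 1


namespace Stmt9Aux

lemma rescale_C' {K : Type*} [CommRing K] (b c : K) :
    PowerSeries.rescale b (PowerSeries.C (R := K) c) = PowerSeries.C (R := K) c := by
  ext n
  rcases n with _ | n <;> simp [PowerSeries.coeff_rescale, PowerSeries.coeff_C]

open PowerSeries in
lemma quintic_unique {y y' : PowerSeries ℚ} (hy : isQuinticSol y) (hy' : isQuinticSol y') :
    y = y' := by
  obtain ⟨hy0, hyE⟩ := hy
  obtain ⟨hy0', hyE'⟩ := hy'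
  have h : (y - y') * ((y ^ 4 + y ^ 3 * y' + y ^ 2 * y' ^ 2 + y * y' ^ 3 + y' ^ 4)
      - C (R := ℚ) (1/6) * X * (y ^ 2 + y * y' + y' ^ 2) + C (R := ℚ) (1/400) * X ^ 2) = 0 := by
    linear_combination hyE - hyE'
  rcases mul_eq_zero.mp h with h0 | h0
  · exact sub_eq_zero.mp h0
  · exfalso
    have hc : constantCoeff (R := ℚ) y = 1 := by
      rw [← coeff_zero_eq_constantCoeff_apply]; exact hy0
    have hc' : constantCoeff (R := ℚ) y' = 1 := by
      rw [← coeff_zero_eq_constantCoeff_apply]; exact hy0'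
    have h1 := congrArg (constantCoeff (R := ℚ)) h0
    simp only [map_sub, map_add, map_mul, map_pow, constantCoeff_X, constantCoeff_C,
      hc, hc', map_zero, map_one, one_pow, mul_one, one_mul] at h1
    norm_num at h1

def c1S : S := ⟨1/6, ⟨1, 5, by norm_num⟩⟩
def c2S : S := ⟨1/400, ⟨4, 2025, by norm_num⟩⟩
def i5S : S := ⟨1/5, ⟨1, 6, by norm_num⟩⟩

lemma h5S : i5S * 5 = 1 := by
  rw [Subtype.ext_iff]
  push_cast
  show (1/5 : ℚ) * 5 = 1
  norm_num

/-- The canonical solution over ℚ. -/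
noncomputable def yQ : PowerSeries ℚ := PowerSeries.map S.subtype (sol c1S c2S i5S)

open PowerSeries in
lemma yQ_sol : isQuinticSol yQ := by
  constructor
  · rw [yQ, coeff_map, sol_const h5S, map_one]
  · have hE := sol_eq (c1 := c1S) (c2 := c2S) h5S
    rw [FF, sub_eq_zero] at hE
    have := congrArg (PowerSeries.map S.subtype) hE
    simp only [map_sub, map_add, map_mul, map_pow, PowerSeries.map_C, PowerSeries.map_X,
      map_one] at this; exact this

lemma yQ_coeff_mem (g : ℕ) : ∃ (N : ℕ) (m : ℤ),
    (30 : ℚ) ^ N * PowerSeries.coeff (R := ℚ) g yQ = (m : ℚ) := by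
  have : PowerSeries.coeff (R := ℚ) g yQ = ((PowerSeries.coeff (R := S) g (sol c1S c2S i5S) : S) : ℚ) := by
    rw [yQ, PowerSeries.coeff_map]; rfl
  rw [this]
  exact (PowerSeries.coeff (R := S) g (sol c1S c2S i5S)).2

open PowerSeries Polynomial in
lemma quintic_vanish {y : PowerSeries ℚ} (hy : isQuinticSol y) {g : ℕ} (hg : g % 5 = 3) :
    PowerSeries.coeff (R := ℚ) g y = 0 := by
  classical
  set K := CyclotomicField 5 ℚ with hK
  haveI : IsCyclotomicExtension {5} ℚ K := CyclotomicField.isCyclotomicExtension 5 ℚ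
  set ζ : K := IsCyclotomicExtension.zeta 5 ℚ K with hζdef
  have hζ : IsPrimitiveRoot ζ 5 := IsCyclotomicExtension.zeta_spec 5 ℚ K
  have hζ5 : ζ ^ (5 : ℕ) = 1 := hζ.pow_eq_one
  have halg : Function.Injective (algebraMap ℚ K) := (algebraMap ℚ K).injective
  set f := algebraMap ℚ K with hf
  set yK : PowerSeries K := PowerSeries.map f y with hyKdef
  set a1 : K := f (1/6) with ha1
  set a2 : K := f (1/400) with ha2
  have hyK0 : PowerSeries.coeff (R := K) 0 yK = 1 := by
    rw [hyKdef, PowerSeries.coeff_map, hy.1, map_one]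
  have hEK : yK ^ 5 - PowerSeries.C (R := K) a1 * PowerSeries.X * yK ^ 3
      + PowerSeries.C (R := K) a2 * PowerSeries.X ^ 2 * yK = 1 := by
    have h := congrArg (PowerSeries.map f) hy.2
    simpa only [map_sub, map_add, map_mul, map_pow, PowerSeries.map_C, PowerSeries.map_X,
      map_one] using h
  set Y : ℕ → PowerSeries K := fun k =>
    PowerSeries.C (R := K) (ζ ^ k) * PowerSeries.rescale (ζ ^ (3 * k)) yK with hYdef
  have hroot : ∀ k, (Y k) ^ 5 - PowerSeries.C (R := K) a1 * PowerSeries.X * (Y k) ^ 3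
      + PowerSeries.C (R := K) a2 * PowerSeries.X ^ 2 * (Y k) = 1 := by
    intro k
    have h1 := congrArg (PowerSeries.rescale (ζ ^ (3 * k))) hEK
    simp only [map_sub, map_add, map_mul, map_pow, PowerSeries.rescale_X, rescale_C',
      map_one] at h1
    have hb : (PowerSeries.C (R := K) ζ) ^ (3 * k) = (PowerSeries.C (R := K) (ζ ^ k)) ^ 3 := by
      rw [← map_pow, ← map_pow, ← pow_mul, mul_comm k 3]
    rw [hb] at h1
    have hc5 : (PowerSeries.C (R := K) (ζ ^ k)) ^ 5 = 1 := by
      rw [← map_pow, ← pow_mul, mul_comm k 5, pow_mul, hζ5, one_pow, map_one]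
    show (PowerSeries.C (R := K) (ζ ^ k) * PowerSeries.rescale (ζ ^ (3 * k)) yK) ^ 5
      - PowerSeries.C (R := K) a1 * PowerSeries.X
        * (PowerSeries.C (R := K) (ζ ^ k) * PowerSeries.rescale (ζ ^ (3 * k)) yK) ^ 3
      + PowerSeries.C (R := K) a2 * PowerSeries.X ^ 2
        * (PowerSeries.C (R := K) (ζ ^ k) * PowerSeries.rescale (ζ ^ (3 * k)) yK) = 1
    set c := PowerSeries.C (R := K) (ζ ^ k)
    set r := PowerSeries.rescale (ζ ^ (3 * k)) yK
    linear_combination c ^ 5 * h1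
      + (PowerSeries.C (R := K) a1 * PowerSeries.X * c ^ 3 * r ^ 3
         - PowerSeries.C (R := K) a2 * PowerSeries.X ^ 2 * c * r * (c ^ 5 + 1)) * hc5 + hc5
  have hcY : ∀ k, PowerSeries.coeff (R := K) 0 (Y k) = ζ ^ k := by
    intro k
    have h0 : PowerSeries.coeff (R := K) 0 (Y k)
        = ζ ^ k * ((ζ ^ (3 * k)) ^ 0 * PowerSeries.coeff (R := K) 0 yK) := by
      simp only [hYdef]
      rw [PowerSeries.coeff_C_mul, PowerSeries.coeff_rescale]
    rw [h0, hyK0, pow_zero, one_mul, mul_one]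
  have hinj : ∀ i ∈ Finset.range 5, ∀ j ∈ Finset.range 5, Y i = Y j → i = j := by
    intro i hi j hj hij
    have h0 := congrArg (PowerSeries.coeff (R := K) 0) hij
    rw [hcY i, hcY j] at h0
    exact hζ.pow_inj (Finset.mem_range.mp hi) (Finset.mem_range.mp hj) h0
  set Q : Polynomial (PowerSeries K) := Polynomial.X ^ 5
      - Polynomial.C (PowerSeries.C (R := K) a1 * PowerSeries.X) * Polynomial.X ^ 3
      + Polynomial.C (PowerSeries.C (R := K) a2 * PowerSeries.X ^ 2) * Polynomial.X - 1 with hQdef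
  have hQeval : ∀ k, Q.eval (Y k) = 0 := by
    intro k
    rw [hQdef]
    simp only [eval_sub, eval_add, eval_mul, eval_pow, eval_X, eval_C, eval_one]
    linear_combination hroot k
  set s : Finset (PowerSeries K) := (Finset.range 5).image Y with hsdef
  have hscard : s.card = 5 := by
    rw [hsdef, Finset.card_image_of_injOn hinj, Finset.card_range]
  set P : Polynomial (PowerSeries K) := ∏ x ∈ s, (Polynomial.X - Polynomial.C x) with hPdef
  have hPmonic : P.Monic := monic_prod_of_monic _ _ fun x _ => monic_X_sub_C x
  have hPdeg : P.natDegree = 5 := by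
    rw [hPdef, natDegree_prod_of_monic _ _ fun x _ => monic_X_sub_C x]
    simp [natDegree_X_sub_C, hscard]
  have hQmonic : Q.Monic := by rw [hQdef]; monicity!
  have hQdeg : Q.natDegree = 5 := by rw [hQdef]; compute_degree!
  have hD : Q - P = 0 := by
    by_cases h0 : Q - P = 0
    · exact h0
    · apply Polynomial.eq_zero_of_natDegree_lt_card_of_eval_eq_zero' _ s
      · intro x hx
        obtain ⟨k, _, rfl⟩ := Finset.mem_image.mp hx
        rw [eval_sub, hQeval k, hPdef, eval_prod, zero_sub, neg_eq_zero]
        refine Finset.prod_eq_zero hx ?_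
        simp
      · rw [hscard]
        rw [Polynomial.natDegree_lt_iff_degree_lt h0]
        have h5Q : Q.degree = (5 : ℕ) := by
          rw [Polynomial.degree_eq_natDegree hQmonic.ne_zero, hQdeg]
        have h5P : P.degree = (5 : ℕ) := by
          rw [Polynomial.degree_eq_natDegree hPmonic.ne_zero, hPdeg]
        have := Polynomial.degree_sub_lt (h5Q.trans h5P.symm) hQmonic.ne_zero
          (hQmonic.leadingCoeff.trans hPmonic.leadingCoeff.symm)
        rw [h5Q] at this
        exact_mod_cast this
  have hQP : Q = P := sub_eq_zero.mp hD
  have hsum : ∑ x ∈ s, x = 0 := by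
    have h4 := Polynomial.prod_X_sub_C_coeff_card_pred s (fun x => x)
      (by rw [hscard]; norm_num)
    rw [hscard] at h4
    have hQ4 : Q.coeff 4 = 0 := by
      rw [hQdef]
      simp only [Polynomial.coeff_sub, Polynomial.coeff_add, Polynomial.coeff_C_mul,
        Polynomial.coeff_X_pow, Polynomial.coeff_X, Polynomial.coeff_one]
      norm_num
    rw [← hPdef] at h4
    rw [← hQP, hQ4] at h4
    linear_combination h4
  have hsumY : ∑ k ∈ Finset.range 5, Y k = 0 := by
    have hsi : ∑ x ∈ (Finset.range 5).image Y, x = ∑ k ∈ Finset.range 5, Y k :=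
      Finset.sum_image hinj
    rw [← hsi]
    rw [hsdef] at hsum
    exact hsum
  have hterm : ∀ k, PowerSeries.coeff (R := K) g (Y k) = PowerSeries.coeff (R := K) g yK := by
    intro k
    have : PowerSeries.coeff (R := K) g (Y k)
        = ζ ^ k * ((ζ ^ (3 * k)) ^ g * PowerSeries.coeff (R := K) g yK) := by
      simp only [hYdef]
      rw [PowerSeries.coeff_C_mul, PowerSeries.coeff_rescale]
    rw [this, ← mul_assoc, ← pow_mul, ← pow_add]
    have h13 : (5 : ℕ) ∣ (1 + 3 * g) := by omega
    have hdvd : (5 : ℕ) ∣ (k + 3 * k * g) := by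
      have h' := Dvd.dvd.mul_left h13 k
      rwa [show k * (1 + 3 * g) = k + 3 * k * g by ring] at h'
    rw [(hζ.pow_eq_one_iff_dvd _).mpr hdvd, one_mul]
  have hcoeff : (5 : K) * PowerSeries.coeff (R := K) g yK = 0 := by
    have h := congrArg (PowerSeries.coeff (R := K) g) hsumY
    rw [map_sum, map_zero] at h
    rw [Finset.sum_congr rfl (fun k _ => hterm k)] at h
    simpa [Finset.sum_const, Finset.card_range, nsmul_eq_mul] using h
  have h5K : (5 : K) ≠ 0 := by
    intro hc
    have : (5 : ℚ) = 0 := halg (by rw [map_ofNat, hc, map_zero])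
    norm_num at this
  have hK0 : PowerSeries.coeff (R := K) g yK = 0 := by
    rcases mul_eq_zero.mp hcoeff with h | h
    · exact absurd h h5K
    · exact h
  apply halg
  rw [map_zero, ← PowerSeries.coeff_map]
  exact hK0

end Stmt9Aux


/-- The quintic `y⁵ - (z/6)y³ + (z²/400)y = 1` has a unique power series solution
`y = Σ_{g≥0} a_g z^g` in `1 + zℚ[[z]]`; every coefficient `a_g` lies in `ℤ[1/30]`
(i.e. `30^N·a_g ∈ ℤ` for some `N`), and `a_g = 0` whenever `g ≡ 3 (mod 5)`. -/
theorem stmt9 :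
    (∃! y : PowerSeries ℚ, isQuinticSol y) ∧
    ∀ y : PowerSeries ℚ, isQuinticSol y → ∀ g : ℕ,
      (∃ (N : ℕ) (m : ℤ), (30 : ℚ) ^ N * PowerSeries.coeff (R := ℚ) g y = (m : ℚ)) ∧
      (g % 5 = 3 → PowerSeries.coeff (R := ℚ) g y = 0) := by
  constructor
  · exact ⟨Stmt9Aux.yQ, Stmt9Aux.yQ_sol,
      fun y hy => Stmt9Aux.quintic_unique hy Stmt9Aux.yQ_sol⟩
  · intro y hy g
    constructor
    · rw [Stmt9Aux.quintic_unique hy Stmt9Aux.yQ_sol]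
      exact Stmt9Aux.yQ_coeff_mem g
    · intro hg
      exact Stmt9Aux.quintic_vanish hy hg
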